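/- Suppose a : ℕ → ℝ is an increasing sequence with a(n) → ∞, k and the resolvent r are summable, x is the solution of the Volterra summation equation, and Λ_a|x| < ∞. Then Λ_a|H| ≤ (1 + Σ_{j=0}^∞ |k(j)|) · Λ_a|x|. -/

import Mathlib

open Filter Finset

/-- `r` is the resolvent of the kernel `k`:
`r(0) = 1` and `r(n+1) = Σ_{j=0}^n k(n−j) r(j)`. -/
def IsResolvent (k r : ℕ → ℝ) : Prop :=
  r 0 = 1 ∧ ∀ n : ℕ, r (n + 1) = ∑ j ∈ Finset.range (n + 1), k (n - j) * r j

/-- `x` solves the Volterra summation equation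
`x(n+1) = Σ_{j=0}^n k(n−j) x(j) + H(n+1)`. -/
def IsVolterraSol (k H x : ℕ → ℝ) : Prop :=
  ∀ n : ℕ, x (n + 1) = (∑ j ∈ Finset.range (n + 1), k (n - j) * x j) + H (n + 1)

/-- `Λ_a|y| = limsup_{n→∞} |y(n)|/a(n)`, computed in the extended reals. -/
noncomputable def Lam (a y : ℕ → ℝ) : EReal :=
  Filter.limsup (fun n => ((|y n| / a n : ℝ) : EReal)) atTop

theorem stmt9 (k r H x : ℕ → ℝ) (ξ : ℝ)
    (a : ℕ → ℝ) (ha : StrictMono a) (ha' : Tendsto a atTop atTop)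
    (hk : Summable fun j => |k j|)
    (hres : IsResolvent k r) (hrs : Summable fun j => |r j|)
    (hx0 : x 0 = ξ) (hx : IsVolterraSol k H x)
    (hxfin : Lam a x < ⊤) :
    Lam a H ≤ ((1 + ∑' j : ℕ, |k j| : ℝ) : EReal) * Lam a x := by
  classical
  set K : ℝ := ∑' j : ℕ, |k j| with hKdef
  have hK0 : 0 ≤ K := tsum_nonneg fun j => abs_nonneg _
  have hapos : ∀ᶠ n in atTop, 0 < a n := ha'.eventually_gt_atTop 0
  have ha1 : ∀ᶠ n in atTop, 1 ≤ a n := ha'.eventually_ge_atTop 1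
  have hnonneg : (0 : EReal) ≤ Lam a x := by
    refine le_limsup_of_frequently_le ?_
    exact (hapos.mono fun n hn => by
      exact_mod_cast div_nonneg (abs_nonneg _) hn.le).frequently
  set L : ℝ := (Lam a x).toReal with hLdef
  have hxne : Lam a x ≠ ⊤ := hxfin.ne
  have hxnb : Lam a x ≠ ⊥ := ne_of_gt (lt_of_lt_of_le (by norm_num) hnonneg)
  have hLam : Lam a x = (L : EReal) := (EReal.coe_toReal hxne hxnb).symm
  have hL0 : 0 ≤ L := by
    have := hnonneg; rw [hLam] at this; exact_mod_cast this
  rw [hLam, ← EReal.coe_mul]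
  -- reduce to: for every real c above (1+K)*L, Lam a H ≤ c
  have key : ∀ c : ℝ, (1 + K) * L < c → Lam a H ≤ (c : EReal) := by
    intro c hc
    set s : ℝ := c - (1 + K) * L with hsdef
    have hs0 : 0 < s := by simp only [hsdef]; linarith
    have h1K : (0:ℝ) < 1 + K := by linarith
    set ε0 : ℝ := s / (2 * (1 + K)) with hε0def
    have hε0 : 0 < ε0 := div_pos hs0 (by linarith)
    have hε0K : ε0 * (1 + K) = s / 2 := by
      rw [hε0def]; field_simp
    have hLε : 0 < L + ε0 := by linarith
    -- eventual bound on |x n| / a n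
    have hev : ∀ᶠ n in atTop, |x n| / a n < L + ε0 := by
      have hlt : Lam a x < ((L + ε0 : ℝ) : EReal) := by
        rw [hLam]; exact_mod_cast lt_add_of_pos_right L hε0
      exact (eventually_lt_of_limsup_lt hlt).mono fun n hn => by exact_mod_cast hn
    obtain ⟨N1, hN1⟩ := eventually_atTop.mp (hev.and (hapos.and ha1))
    set C : ℝ := ∑ j ∈ range N1, |x j| with hCdef
    have hC0 : 0 ≤ C := Finset.sum_nonneg fun j _ => abs_nonneg _
    have hCx : ∀ j < N1, |x j| ≤ C := fun j hj =>
      Finset.single_le_sum (f := fun j => |x j|) (fun i _ => abs_nonneg _)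
        (Finset.mem_range.mpr hj)
    set t : ℝ := s / (2 * (C + 1)) with htdef
    have ht0 : 0 < t := div_pos hs0 (by linarith)
    have hCt : C * t ≤ s / 2 := by
      have h1 : C * t ≤ (C + 1) * t :=
        mul_le_mul_of_nonneg_right (by linarith) ht0.le
      have h2 : (C + 1) * t = s / 2 := by
        rw [htdef]; field_simp
      linarith
    -- choose M with the tail sum of |k| at most t
    have hsum : Tendsto (fun m => ∑ j ∈ range m, |k j|) atTop (nhds K) :=
      hk.hasSum.tendsto_sum_nat
    obtain ⟨M, hM⟩ := (hsum.eventually (eventually_gt_nhds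
      (show K - t < K by linarith))).exists
    have htail : ∀ n, ∑ j ∈ Finset.Ico M n, |k j| ≤ t := by
      intro n
      rcases le_or_gt M n with h | h
      · have hsplit : ∑ j ∈ range M, |k j| + ∑ j ∈ Finset.Ico M n, |k j|
            = ∑ j ∈ range n, |k j| := by
          rw [Finset.range_eq_Ico, Finset.range_eq_Ico]
          exact Finset.sum_Ico_consecutive _ (Nat.zero_le M) h
        have hle : ∑ j ∈ range n, |k j| ≤ K :=
          Summable.sum_le_tsum (range n) (fun i _ => abs_nonneg _) hk
        linarith
      · rw [Finset.Ico_eq_empty (by omega)]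
        simpa using ht0.le
    -- the eventual bound on |H m| / a m
    have hHev : ∀ᶠ m in atTop, |H m| / a m ≤ c := by
      rw [eventually_atTop]
      refine ⟨N1 + M + 1, ?_⟩
      intro m hm
      obtain ⟨n, rfl⟩ : ∃ n, m = n + 1 := ⟨m - 1, by omega⟩
      have hn : N1 + M ≤ n := by omega
      obtain ⟨hx1, hap, hA1⟩ := hN1 (n + 1) (by omega)
      -- bound on the sum over j < N1
      have hA : ∑ j ∈ range N1, |k (n - j)| * |x j| ≤ C * t := by
        have h1 : ∑ j ∈ range N1, |k (n - j)| * |x j|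
            ≤ ∑ j ∈ range N1, |k (n - j)| * C :=
          Finset.sum_le_sum fun j hj =>
            mul_le_mul_of_nonneg_left (hCx j (Finset.mem_range.mp hj)) (abs_nonneg _)
        have h2 : ∑ j ∈ range N1, |k (n - j)|
            = ∑ m ∈ (range N1).image (fun j => n - j), |k m| := by
          rw [Finset.sum_image]
          intro i hi j hj hij
          have hi' := Finset.mem_range.mp hi
          have hj' := Finset.mem_range.mp hj
          simp only at hij
          omega
        have h3 : (range N1).image (fun j => n - j) ⊆ Finset.Ico M (n + 1) := by
          intro m hm'
          obtain ⟨j, hj, rfl⟩ := Finset.mem_image.mp hm'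
          have := Finset.mem_range.mp hj
          rw [Finset.mem_Ico]
          omega
        have h4 : ∑ j ∈ range N1, |k (n - j)| ≤ t := by
          rw [h2]
          calc ∑ m ∈ (range N1).image (fun j => n - j), |k m|
              ≤ ∑ m ∈ Finset.Ico M (n + 1), |k m| :=
                Finset.sum_le_sum_of_subset_of_nonneg h3 fun i _ _ => abs_nonneg _
            _ ≤ t := htail (n + 1)
        calc ∑ j ∈ range N1, |k (n - j)| * |x j|
            ≤ ∑ j ∈ range N1, |k (n - j)| * C := h1
          _ = (∑ j ∈ range N1, |k (n - j)|) * C := by rw [Finset.sum_mul]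
          _ ≤ t * C := mul_le_mul_of_nonneg_right h4 hC0
          _ = C * t := mul_comm _ _
      -- bound on the sum over N1 ≤ j ≤ n
      have hB : ∑ j ∈ Finset.Ico N1 (n + 1), |k (n - j)| * |x j|
          ≤ (L + ε0) * a (n + 1) * K := by
        have h1 : ∀ j ∈ Finset.Ico N1 (n + 1),
            |k (n - j)| * |x j| ≤ |k (n - j)| * ((L + ε0) * a (n + 1)) := by
          intro j hj
          rw [Finset.mem_Ico] at hj
          obtain ⟨hxj, hapj, _⟩ := hN1 j hj.1
          have hxj' : |x j| ≤ (L + ε0) * a j := ((div_lt_iff₀ hapj).mp hxj).le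
          have haj : a j ≤ a (n + 1) := ha.monotone (by omega)
          refine mul_le_mul_of_nonneg_left ?_ (abs_nonneg _)
          calc |x j| ≤ (L + ε0) * a j := hxj'
            _ ≤ (L + ε0) * a (n + 1) := mul_le_mul_of_nonneg_left haj hLε.le
        have h2 : ∑ j ∈ Finset.Ico N1 (n + 1), |k (n - j)| ≤ K := by
          calc ∑ j ∈ Finset.Ico N1 (n + 1), |k (n - j)|
              ≤ ∑ j ∈ range (n + 1), |k (n - j)| := by
                refine Finset.sum_le_sum_of_subset_of_nonneg ?_ fun i _ _ => abs_nonneg _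
                intro j hj
                rw [Finset.mem_Ico] at hj
                exact Finset.mem_range.mpr hj.2
            _ = ∑ j ∈ range (n + 1), |k j| := by
                have := Finset.sum_range_reflect (fun m => |k m|) (n + 1)
                simpa using this
            _ ≤ K := Summable.sum_le_tsum (range (n + 1)) (fun i _ => abs_nonneg _) hk
        calc ∑ j ∈ Finset.Ico N1 (n + 1), |k (n - j)| * |x j|
            ≤ ∑ j ∈ Finset.Ico N1 (n + 1), |k (n - j)| * ((L + ε0) * a (n + 1)) :=
              Finset.sum_le_sum h1
          _ = (∑ j ∈ Finset.Ico N1 (n + 1), |k (n - j)|) * ((L + ε0) * a (n + 1)) := by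
              rw [Finset.sum_mul]
          _ ≤ K * ((L + ε0) * a (n + 1)) :=
              mul_le_mul_of_nonneg_right h2 (by positivity)
          _ = (L + ε0) * a (n + 1) * K := by ring
      -- numerator bound
      have hnum : |H (n + 1)| ≤ |x (n + 1)| + (C * t + (L + ε0) * a (n + 1) * K) := by
        have hEq : H (n + 1) = x (n + 1) - ∑ j ∈ range (n + 1), k (n - j) * x j := by
          rw [hx n]; ring
        have hsumabs : |∑ j ∈ range (n + 1), k (n - j) * x j|
            ≤ ∑ j ∈ range (n + 1), |k (n - j)| * |x j| := by
          calc |∑ j ∈ range (n + 1), k (n - j) * x j|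
              ≤ ∑ j ∈ range (n + 1), |k (n - j) * x j| :=
                Finset.abs_sum_le_sum_abs _ _
            _ = ∑ j ∈ range (n + 1), |k (n - j)| * |x j| := by
                simp [abs_mul]
        have hsplit : ∑ j ∈ range (n + 1), |k (n - j)| * |x j|
            = ∑ j ∈ range N1, |k (n - j)| * |x j|
              + ∑ j ∈ Finset.Ico N1 (n + 1), |k (n - j)| * |x j| := by
          rw [Finset.range_eq_Ico,
            ← Finset.sum_Ico_consecutive _ (Nat.zero_le N1) (by omega : N1 ≤ n + 1), ← Finset.range_eq_Ico]
        have h5 : |H (n + 1)| ≤ |x (n + 1)| + |∑ j ∈ range (n + 1), k (n - j) * x j| := by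
          rw [hEq]; exact abs_sub _ _
        have := hsplit ▸ hsumabs
        linarith
      -- divide by a (n+1)
      have hAne : a (n + 1) ≠ 0 := ne_of_gt hap
      have hdiv : |H (n + 1)| / a (n + 1)
          ≤ |x (n + 1)| / a (n + 1) + (C * t) / a (n + 1) + (L + ε0) * K := by
        have h6 : ((L + ε0) * a (n + 1) * K) / a (n + 1) = (L + ε0) * K := by
          field_simp
        calc |H (n + 1)| / a (n + 1)
            ≤ (|x (n + 1)| + (C * t + (L + ε0) * a (n + 1) * K)) / a (n + 1) :=
              by gcongr
          _ = |x (n + 1)| / a (n + 1) + (C * t) / a (n + 1)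
              + ((L + ε0) * a (n + 1) * K) / a (n + 1) := by ring
          _ = |x (n + 1)| / a (n + 1) + (C * t) / a (n + 1) + (L + ε0) * K := by
              rw [h6]
      have h7 : (C * t) / a (n + 1) ≤ C * t :=
        div_le_self (by positivity) hA1
      have h8 : |x (n + 1)| / a (n + 1) ≤ L + ε0 := hx1.le
      have e1 : ε0 * (1 + K) = ε0 + ε0 * K := by ring
      have e2 : (L + ε0) * K = L * K + ε0 * K := by ring
      have e3 : (1 + K) * L = L + L * K := by ring
      have e4 : c = (1 + K) * L + s := by rw [hsdef]; ring
      linarith [hdiv, h7, h8, hCt, hε0K, e1, e2, e3, e4]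
    refine limsup_le_of_le (by isBoundedDefault) ?_
    exact hHev.mono fun n hn => by exact_mod_cast hn
  -- conclude
  by_contra hcon
  push_neg at hcon
  obtain ⟨z, hz1, hz2⟩ := exists_between hcon
  have hzt : z ≠ ⊤ := (lt_of_lt_of_le hz2 le_top).ne
  have hzb : z ≠ ⊥ := (lt_of_le_of_lt bot_le hz1).ne'
  set c : ℝ := z.toReal with hcdef
  have hzc : z = (c : EReal) := (EReal.coe_toReal hzt hzb).symm
  rw [hzc] at hz1 hz2
  have hc : (1 + K) * L < c := by exact_mod_cast hz1
  exact absurd (key c hc) (not_le.mpr hz2)
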